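/- Let Π be a natural deduction derivation in the minimal implicational logic M⊃ of a formula α from a finite set Δ = {δ1,…,δn} of open assumptions. Then there exists a normal natural deduction derivation Π′ of α from some subset Δ′ ⊆ Δ. -/
import Mathlib


/-- Formulas of minimal implicational logic M⊃. -/
inductive MFormula : Type
  | var : ℕ → MFormula
  | imp : MFormula → MFormula → MFormula
deriving DecidableEq

namespace MFormula

/-- Size of a formula: number of vertices of its syntax tree. -/
def size : MFormula → ℕ
  | .var _ => 1
  | .imp a b => a.size + b.size + 1

/-- Subformula relation. -/
inductive Subf : MFormula → MFormula → Prop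
  | refl (t : MFormula) : Subf t t
  | impL {s a b : MFormula} : Subf s a → Subf s (imp a b)
  | impR {s a b : MFormula} : Subf s b → Subf s (imp a b)

/-- The finite set of subformulas of a formula. -/
def subformulas : MFormula → Finset MFormula
  | .var n => {.var n}
  | .imp a b => insert (imp a b) (a.subformulas ∪ b.subformulas)

end MFormula

/-- Natural deduction derivation trees for M⊃.  A leaf is an assumption
occurrence, carrying its formula and `none` if it stays open, or `some n`
if it is discharged by the `n`-th ⊃-Intro application below it (de Bruijn
style, counting enclosing ⊃-Intro applications from the leaf downwards).
`elim a b` applies ⊃-Elim with minor premise `a` and major premise `b`;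
`intro A t` applies ⊃-Intro discharging (the marked occurrences of) `A`. -/
inductive NDTree : Type
  | leaf : MFormula → Option ℕ → NDTree
  | elim : NDTree → NDTree → NDTree
  | intro : MFormula → NDTree → NDTree
deriving DecidableEq

namespace NDTree

/-- Conclusion of a derivation tree relative to the list of formulas
introduced by enclosing ⊃-Intro applications (innermost first);
`none` if the tree is not a well-formed derivation. -/
def concl : NDTree → List MFormula → Option MFormula
  | .leaf A none, _ => some A
  | .leaf A (some n), ctx => if ctx[n]? = some A then some A else none
  | .elim a b, ctx =>
      match concl a ctx, concl b ctx with
      | some x, some (.imp p q) => if p = x then some q else none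
      | _, _ => none
  | .intro A t, ctx => (concl t (A :: ctx)).map (fun B => MFormula.imp A B)

/-- Size of a derivation: its number of nodes. -/
def size : NDTree → ℕ
  | .leaf _ _ => 1
  | .elim a b => a.size + b.size + 1
  | .intro _ t => t.size + 1

/-- Height of a derivation: maximal number of edges on a root-to-leaf path. -/
def height : NDTree → ℕ
  | .leaf _ _ => 0
  | .elim a b => max a.height b.height + 1
  | .intro _ t => t.height + 1

/-- Open assumptions of a subtree sitting below `d` of its own
⊃-Intro applications (at top level `d = 0`): leaves discharged by no
⊃-Intro of the subtree itself. -/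
def openAssumAux : NDTree → ℕ → Finset MFormula
  | .leaf A none, _ => {A}
  | .leaf A (some n), d => if d ≤ n then {A} else ∅
  | .elim a b, d => openAssumAux a d ∪ openAssumAux b d
  | .intro _ t, d => openAssumAux t (d + 1)

/-- The set of open (undischarged) assumptions of a derivation. -/
def openAssum (t : NDTree) : Finset MFormula := openAssumAux t 0

/-- A derivation is normal if no formula occurrence is simultaneously the
conclusion of a ⊃-Intro and the major premise of a ⊃-Elim. -/
def Normal : NDTree → Prop
  | .leaf _ _ => True
  | .elim a b => Normal a ∧ Normal b ∧ ∀ A u, b ≠ .intro A u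
  | .intro _ t => Normal t

/-- `T` is a proof of `α`: a derivation with conclusion `α` and
no open assumptions. -/
def IsProofOf (t : NDTree) (α : MFormula) : Prop :=
  concl t [] = some α ∧ openAssum t = ∅

/-- A normal derivation (in context `ctx`) is expanded if every minimal
formula, i.e. every formula occurrence that is both the conclusion of a
⊃-Elim and the premise of a ⊃-Intro, is a propositional variable. -/
def Expanded : NDTree → List MFormula → Prop
  | .leaf _ _, _ => True
  | .elim a b, ctx => Expanded a ctx ∧ Expanded b ctx
  | .intro A t, ctx => Expanded t (A :: ctx) ∧
      (∀ u v, t = .elim u v → ∃ i, concl t (A :: ctx) = some (.var i))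

/-- `Subtree s t`: `s` is a sub-derivation (a node of `t` together with
everything above it) of `t`. -/
inductive Subtree : NDTree → NDTree → Prop
  | refl (t : NDTree) : Subtree t t
  | elimL {s a b : NDTree} : Subtree s a → Subtree s (.elim a b)
  | elimR {s a b : NDTree} : Subtree s b → Subtree s (.elim a b)
  | intro {s : NDTree} {A : MFormula} {t : NDTree} : Subtree s t → Subtree s (.intro A t)

/-- Number of instances (sub-derivation occurrences identical to `s`
as labeled trees) of `s` in a derivation. -/
def countInst (s : NDTree) : NDTree → ℕ
  | .leaf A o => if NDTree.leaf A o = s then 1 else 0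
  | .elim a b => (if NDTree.elim a b = s then 1 else 0) + countInst s a + countInst s b
  | .intro A t => (if NDTree.intro A t = s then 1 else 0) + countInst s t

/-- Number of instances of `s` occurring at level (distance from the root) `μ`. -/
def countInstAt (s : NDTree) : NDTree → ℕ → ℕ
  | t, 0 => if t = s then 1 else 0
  | .leaf _ _, _ + 1 => 0
  | .elim a b, n + 1 => countInstAt s a n + countInstAt s b n
  | .intro _ t, n + 1 => countInstAt s t n

/-- `OccAt T ctx s ctx'` : `s` occurs in `T` (whose own context is `ctx`)
as a node-with-everything-above-it, with enclosing-intro context `ctx'`. -/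
inductive OccAt : NDTree → List MFormula → NDTree → List MFormula → Prop
  | refl (t : NDTree) (ctx : List MFormula) : OccAt t ctx t ctx
  | elimL {T : NDTree} {ctx : List MFormula} {a b : NDTree} {ctx' : List MFormula} :
      OccAt T ctx (.elim a b) ctx' → OccAt T ctx a ctx'
  | elimR {T : NDTree} {ctx : List MFormula} {a b : NDTree} {ctx' : List MFormula} :
      OccAt T ctx (.elim a b) ctx' → OccAt T ctx b ctx'
  | intro {T : NDTree} {ctx : List MFormula} {A : MFormula} {t : NDTree} {ctx' : List MFormula} :
      OccAt T ctx (.intro A t) ctx' → OccAt T ctx t (A :: ctx')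

/-- Each node of a derivation lies on a unique branch; branches are in
bijection with their endpoints: the root of the derivation and the minor
premises of ⊃-Elim applications. -/
def IsBranchEndpoint (T s : NDTree) (ctx : List MFormula) : Prop :=
  (s = T ∧ ctx = []) ∨ ∃ u, OccAt T [] (NDTree.elim s u) ctx

/-- The (top-down) sequence of formulas of the branch ending at the root of
the given subtree: trace upwards through premises of ⊃-Intro and major
premises of ⊃-Elim up to a top-formula. -/
def branchSeq : NDTree → List MFormula → Option (List MFormula)
  | .leaf A o, ctx => (concl (.leaf A o) ctx).map (fun c => [c])
  | .elim a b, ctx =>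
      match branchSeq b ctx, concl (.elim a b) ctx with
      | some l, some c => some (l ++ [c])
      | _, _ => none
  | .intro A t, ctx =>
      match branchSeq t (A :: ctx), concl (.intro A t) ctx with
      | some l, some c => some (l ++ [c])
      | _, _ => none

/-- The (top-down) E-part of the branch ending at the root of the given
subtree: the top-formula and the successive conclusions of major-premise
⊃-Elim steps, ending at the minimal formula of the branch. -/
def epart : NDTree → List MFormula → Option (List MFormula)
  | .leaf A o, ctx => (concl (.leaf A o) ctx).map (fun c => [c])
  | .elim a b, ctx =>
      match epart b ctx, concl (.elim a b) ctx with
      | some l, some c => some (l ++ [c])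
      | _, _ => none
  | .intro A t, ctx => epart t (A :: ctx)

/-- Number of ⊃-Intro applications forming the I-part at the bottom of a
branch endpoint subtree. -/
def introCount : NDTree → ℕ
  | .intro _ t => introCount t + 1
  | _ => 0

/-- Count of branch endpoints strictly inside the given subtree (i.e. minor
premises of ⊃-Elim) whose branch has formula sequence `b`. -/
def brCount (b : List MFormula) : NDTree → List MFormula → ℕ
  | .leaf _ _, _ => 0
  | .elim a c, ctx =>
      (if branchSeq a ctx = some b then 1 else 0) + brCount b a ctx + brCount b c ctx
  | .intro A t, ctx => brCount b t (A :: ctx)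

/-- Total number of branches of `T` whose formula sequence is `b`. -/
def brTotal (b : List MFormula) (T : NDTree) : ℕ :=
  (if branchSeq T [] = some b then 1 else 0) + brCount b T []

/-- Count of branch endpoints strictly inside the given subtree (whose root
is at level `d` of the ambient derivation) whose branch has formula
sequence `b` and whose minimal formula occurs at level `μ`. -/
def brMinCount (b : List MFormula) (μ : ℕ) : NDTree → List MFormula → ℕ → ℕ
  | .leaf _ _, _, _ => 0
  | .elim a c, ctx, d =>
      (if branchSeq a ctx = some b ∧ d + 1 + introCount a = μ then 1 else 0)
      + brMinCount b μ a ctx (d + 1) + brMinCount b μ c ctx (d + 1)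
  | .intro A t, ctx, d => brMinCount b μ t (A :: ctx) (d + 1)

/-- Total number of branches of `T` with formula sequence `b` whose minimal
formula occurs at level `μ` of `T`. -/
def brMinTotal (b : List MFormula) (μ : ℕ) (T : NDTree) : ℕ :=
  (if branchSeq T [] = some b ∧ introCount T = μ then 1 else 0) + brMinCount b μ T [] 0

/-- No occurrence of `A` in the given subtree (sitting at intro-depth `d`
below a fixed ⊃-Intro application) is an open assumption of the subtree
escaping that ⊃-Intro: every leaf labeled `A` is discharged by an
⊃-Intro at distance at most `d`. -/
def NoOpenBeyond (A : MFormula) : NDTree → ℕ → Prop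
  | .leaf B o, d => B = A → ∃ n, o = some n ∧ n ≤ d
  | .elim a b, d => NoOpenBeyond A a d ∧ NoOpenBeyond A b d
  | .intro _ t, d => NoOpenBeyond A t (d + 1)

/-- Every ⊃-Intro application of the derivation is greedy: it discharges
all occurrences of its assumption that are open in the sub-derivation of
its premise. -/
def Greedy : NDTree → Prop
  | .leaf _ _ => True
  | .elim a b => Greedy a ∧ Greedy b
  | .intro A t => NoOpenBeyond A t 0 ∧ Greedy t

/-- A matrix of `T`: a sub-derivation all of whose instances in `T` occur
at a single level. -/
def IsMatrix (s T : NDTree) : Prop :=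
  Subtree s T ∧ ∃ μ, ∀ ν, 0 < countInstAt s T ν → ν = μ

end NDTree

/-- A Kripke model for M⊃: a preordered set of worlds with a monotone
valuation on propositional variables. -/
structure KModel where
  World : Type
  le : World → World → Prop
  le_refl : ∀ w, le w w
  le_trans : ∀ {a b c}, le a b → le b c → le a c
  val : World → ℕ → Prop
  mono : ∀ {w w'}, le w w' → ∀ p, val w p → val w' p

/-- Kripke satisfaction for M⊃. -/
def KSat (M : KModel) : MFormula → M.World → Prop
  | .var p, w => M.val w p
  | .imp a b, w => ∀ w', M.le w w' → KSat M a w' → KSat M b w'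

/-- Semantic entailment: every world of every Kripke model satisfying all
of `Δ` satisfies `β`. -/
def KEntails (Δ : Set MFormula) (β : MFormula) : Prop :=
  ∀ (M : KModel) (w : M.World), (∀ δ ∈ Δ, KSat M δ w) → KSat M β w

namespace NDTree

/-- Discharge all `none`-leaves labeled `A` at bind-depth `d`. -/
def bindA (A : MFormula) : NDTree → ℕ → NDTree
  | .leaf B none, d => if B = A then .leaf B (some d) else .leaf B none
  | .leaf B (some n), _ => .leaf B (some n)
  | .elim a b, d => .elim (bindA A a d) (bindA A b d)
  | .intro C t, d => .intro C (bindA A t (d + 1))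

/-- Labels of undischarged (`none`) leaves. -/
def leafNones : NDTree → Finset MFormula
  | .leaf B none => {B}
  | .leaf _ (some _) => ∅
  | .elim a b => leafNones a ∪ leafNones b
  | .intro _ t => leafNones t

lemma leafNones_subset : ∀ (t : NDTree) (d : ℕ), leafNones t ⊆ openAssumAux t d := by
  intro t
  induction t with
  | leaf B o =>
    cases o <;> intro d <;> simp [leafNones, openAssumAux]
  | elim a b iha ihb =>
    intro d
    simp only [leafNones, openAssumAux]
    exact Finset.union_subset ((iha d).trans Finset.subset_union_left)
      ((ihb d).trans Finset.subset_union_right)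
  | intro C t ih =>
    intro d
    simpa [leafNones, openAssumAux] using ih (d + 1)

lemma concl_extend : ∀ (t : NDTree) (ctx ext : List MFormula) (c : MFormula),
    concl t ctx = some c → concl t (ctx ++ ext) = some c := by
  intro t
  induction t with
  | leaf B o =>
    intro ctx ext c h
    cases o with
    | none => simpa [concl] using h
    | some n =>
      simp only [concl] at h ⊢
      split_ifs at h with hc
      · obtain ⟨hlt, _⟩ := List.getElem?_eq_some_iff.mp hc
        rw [List.getElem?_append, if_pos hlt, hc]
        simpa using h
  | elim a b iha ihb =>
    intro ctx ext c h
    simp only [concl] at h ⊢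
    cases ha : concl a ctx with
    | none => rw [ha] at h; exact absurd h (by simp)
    | some x =>
      rw [ha] at h
      cases hb : concl b ctx with
      | none => rw [hb] at h; exact absurd h (by simp)
      | some y =>
        rw [hb] at h
        rw [iha ctx ext x ha, ihb ctx ext y hb]
        exact h
  | intro A t ih =>
    intro ctx ext c h
    simp only [concl, Option.map_eq_some_iff] at h ⊢
    obtain ⟨B, hB, rfl⟩ := h
    exact ⟨B, ih (A :: ctx) ext B hB, rfl⟩

lemma bind_concl {A : MFormula} : ∀ (t : NDTree) (ctx : List MFormula) (d : ℕ),
    ctx[d]? = some A → concl (bindA A t d) ctx = concl t ctx := by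
  intro t
  induction t with
  | leaf B o =>
    intro ctx d hd
    cases o with
    | none =>
      by_cases hBA : B = A
      · subst hBA; simp [bindA, concl, hd]
      · simp [bindA, hBA]
    | some n => simp [bindA]
  | elim a b iha ihb =>
    intro ctx d hd
    simp only [bindA, concl, iha ctx d hd, ihb ctx d hd]
  | intro C t ih =>
    intro ctx d hd
    simp only [bindA, concl]
    rw [ih (C :: ctx) (d + 1) (by simpa using hd)]

lemma bind_normal {A : MFormula} : ∀ {t : NDTree} (d : ℕ), Normal t → Normal (bindA A t d) := by
  intro t
  induction t with
  | leaf B o =>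
    intro d _
    cases o with
    | none => by_cases hBA : B = A <;> simp [bindA, hBA, Normal]
    | some n => simp [bindA, Normal]
  | elim a b iha ihb =>
    intro d h
    obtain ⟨h1, h2, h3⟩ := h
    refine ⟨iha d h1, ihb d h2, ?_⟩
    intro C u hu
    cases b with
    | leaf B o =>
      cases o with
      | none => by_cases hBA : B = A <;> simp [bindA, hBA] at hu
      | some n => simp [bindA] at hu
    | elim x y => simp [bindA] at hu
    | intro C' t' => exact h3 C' t' rfl
  | intro C t ih =>
    intro d h
    exact ih (d + 1) h

lemma bind_open {A : MFormula} : ∀ (t : NDTree) (ctx : List MFormula) (c : MFormula) (d : ℕ),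
    ctx.length = d + 1 → concl t ctx = some c →
    openAssumAux (bindA A t d) (d + 1) ⊆ openAssumAux t d \ {A} := by
  intro t
  induction t with
  | leaf B o =>
    intro ctx c d hlen h
    cases o with
    | none =>
      by_cases hBA : B = A
      · subst hBA
        simp [bindA, openAssumAux]
      · simp [bindA, hBA, openAssumAux, Finset.subset_sdiff,
          Finset.disjoint_singleton_right, Ne.symm hBA]
    | some n =>
      simp only [concl] at h
      split_ifs at h with hc
      obtain ⟨hlt, _⟩ := List.getElem?_eq_some_iff.mp hc
      rw [hlen] at hlt
      have : ¬ (d + 1 ≤ n) := by omega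
      simp [bindA, openAssumAux, this]
  | elim a b iha ihb =>
    intro ctx c d hlen h
    simp only [concl] at h
    cases ha : concl a ctx with
    | none => rw [ha] at h; exact absurd h (by simp)
    | some x =>
      rw [ha] at h
      cases hb : concl b ctx with
      | none => rw [hb] at h; exact absurd h (by simp)
      | some y =>
        rw [hb] at h
        cases y with
        | var p => exact absurd h (by simp)
        | imp p q =>
          simp only [bindA, openAssumAux]
          exact Finset.union_subset
            ((iha ctx x d hlen ha).trans (Finset.sdiff_subset_sdiff Finset.subset_union_left (le_refl _)))
            ((ihb ctx (.imp p q) d hlen hb).trans (Finset.sdiff_subset_sdiff Finset.subset_union_right (le_refl _)))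
  | intro C t ih =>
    intro ctx c d hlen h
    simp only [concl, Option.map_eq_some_iff] at h
    obtain ⟨B, hB, rfl⟩ := h
    simpa [bindA, openAssumAux] using ih (C :: ctx) B (d + 1) (by simp [hlen]) hB

/-- Normal derivations of `α` with open assumptions in `Γ`. -/
def Nfm (Γ : Finset MFormula) (α : MFormula) : Prop :=
  ∃ t : NDTree, t.Normal ∧ t.concl [] = some α ∧ t.openAssum ⊆ Γ

/-- Neutral derivations: normal, not ending with ⊃-Intro. -/
def Nem (Γ : Finset MFormula) (α : MFormula) : Prop :=
  ∃ t : NDTree, t.Normal ∧ (∀ A u, t ≠ .intro A u) ∧ t.concl [] = some α ∧ t.openAssum ⊆ Γ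

/-- Kripke-style forcing over contexts ordered by inclusion. -/
def Frc : MFormula → Finset MFormula → Prop
  | .var p => fun Γ => Nfm Γ (.var p)
  | .imp a b => fun Γ => ∀ Γ', Γ ⊆ Γ' → Frc a Γ' → Frc b Γ'

lemma Frc_mono : ∀ (α : MFormula) {Γ Γ' : Finset MFormula}, Γ ⊆ Γ' → Frc α Γ → Frc α Γ'
  | .var _, _, _, h, ⟨t, hN, hc, ho⟩ => ⟨t, hN, hc, ho.trans h⟩
  | .imp _ _, _, _, h, f => fun Γ'' h2 ha => f Γ'' (h.trans h2) ha

lemma rr : ∀ α : MFormula, (∀ Γ, Nem Γ α → Frc α Γ) ∧ (∀ Γ, Frc α Γ → Nfm Γ α) := by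
  intro α
  induction α with
  | var p =>
    exact ⟨fun Γ ⟨t, hN, _, hc, ho⟩ => ⟨t, hN, hc, ho⟩, fun Γ h => h⟩
  | imp a b iha ihb =>
    constructor
    · rintro Γ ⟨t, hN, hni, hc, ho⟩ Γ' hsub ha
      obtain ⟨u, huN, huc, huo⟩ := iha.2 Γ' ha
      refine ihb.1 Γ' ⟨.elim u t, ⟨huN, hN, hni⟩,
        (fun A v h => NDTree.noConfusion h), ?_, ?_⟩
      · simp [concl, huc, hc]
      · show openAssumAux u 0 ∪ openAssumAux t 0 ⊆ Γ'
        exact Finset.union_subset huo (ho.trans hsub)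
    · intro Γ f
      have hA : Nem (insert a Γ) a := by
        refine ⟨.leaf a none, trivial, fun A v h => NDTree.noConfusion h, ?_, ?_⟩
        · simp [concl]
        · simp [openAssum, openAssumAux]
      have hb := f (insert a Γ) (Finset.subset_insert a Γ) (iha.1 _ hA)
      obtain ⟨t, hN, hc, ho⟩ := ihb.2 _ hb
      have hc1 : concl t [a] = some b := concl_extend t [] [a] b hc
      refine ⟨.intro a (bindA a t 0), bind_normal 0 hN, ?_, ?_⟩
      · show (concl (bindA a t 0) [a]).map (fun B => MFormula.imp a B)
            = some (MFormula.imp a b)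
        rw [bind_concl t [a] 0 (by simp), hc1]
        rfl
      · show openAssumAux (bindA a t 0) 1 ⊆ Γ
        refine (bind_open t [a] b 0 rfl hc1).trans ?_
        intro x hx
        rw [Finset.mem_sdiff, Finset.mem_singleton] at hx
        have := ho hx.1
        rw [Finset.mem_insert] at this
        tauto

lemma sound : ∀ (T : NDTree) (ctx : List MFormula) (α : MFormula) (Γ : Finset MFormula),
    T.concl ctx = some α → (∀ (n : ℕ) (B : MFormula), ctx[n]? = some B → Frc B Γ) →
    leafNones T ⊆ Γ → Frc α Γ := by
  intro T
  induction T with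
  | leaf B o =>
    intro ctx α Γ h henv hln
    cases o with
    | none =>
      simp only [concl, Option.some_inj] at h
      subst h
      refine (rr B).1 Γ ⟨.leaf B none, trivial, fun A v hv => NDTree.noConfusion hv, by simp [concl], ?_⟩
      show ({B} : Finset MFormula) ⊆ Γ
      simpa [leafNones] using hln
    | some n =>
      simp only [concl] at h
      split_ifs at h with hc
      simp only [Option.some_inj] at h
      subst h
      exact henv n B hc
  | elim a b iha ihb =>
    intro ctx α Γ h henv hln
    simp only [concl] at h
    cases ha : concl a ctx with
    | none => rw [ha] at h; exact absurd h (by simp)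
    | some x =>
      rw [ha] at h
      cases hb : concl b ctx with
      | none => rw [hb] at h; exact absurd h (by simp)
      | some y =>
        rw [hb] at h
        cases y with
        | var p => exact absurd h (by simp)
        | imp p q =>
          simp only at h
          split_ifs at h with hpx
          simp only [Option.some_inj] at h
          subst h
          subst hpx
          have hsub : leafNones a ⊆ Γ ∧ leafNones b ⊆ Γ := by
            constructor <;> refine Finset.Subset.trans ?_ hln <;>
              simp [leafNones, Finset.subset_union_left, Finset.subset_union_right]
          exact ihb ctx (.imp p q) Γ hb henv hsub.2 Γ (le_refl _)
            (iha ctx p Γ ha henv hsub.1)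
  | intro A t ih =>
    intro ctx α Γ h henv hln
    simp only [concl, Option.map_eq_some_iff] at h
    obtain ⟨B, hB, rfl⟩ := h
    intro Γ' hsub hfa
    refine ih (A :: ctx) B Γ' hB ?_ ?_
    · intro n C hC
      cases n with
      | zero =>
        simp only [List.getElem?_cons_zero, Option.some_inj] at hC
        subst hC; exact hfa
      | succ m =>
        simp only [List.getElem?_cons_succ] at hC
        exact Frc_mono C hsub (henv m C hC)
    · exact Finset.Subset.trans (by simp [leafNones]) (hln.trans hsub)

end NDTree

/-- Normalization: every derivation of α from Δ yields a
normal derivation of α from some Δ′ ⊆ Δ. -/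
theorem normalization (T : NDTree) (α : MFormula)
    (hconcl : T.concl [] = some α) :
    ∃ T' : NDTree, T'.Normal ∧ T'.concl [] = some α ∧ T'.openAssum ⊆ T.openAssum := by
  have h := NDTree.sound T [] α T.openAssum hconcl (by simp)
    (NDTree.leafNones_subset T 0)
  obtain ⟨t, hN, hc, ho⟩ := (NDTree.rr α).2 _ h
  exact ⟨t, hN, hc, ho⟩
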